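/- Let E be a full Hilbert B-module over a C*-algebra B and suppose X, Y ∈ E are such that b = ⟨X,Y⟩ is invertible in B (B unital). Then ⟨X,X⟩ is invertible in B, and X⟨X,X⟩^{-1/2} is a unit vector in E. -/

import Mathlib

theorem unit_vector_from_invertible_inner
    {B E : Type*} [NormedRing B] [StarRing B] [CStarRing B] [CompleteSpace B]
    [NormedAlgebra ℂ B] [StarModule ℂ B] [PartialOrder B] [StarOrderedRing B]
    [NormedAddCommGroup E] [CompleteSpace E]
    (r : E → B → E)                                  -- the right module action
    (hr_add : ∀ x y b, r (x + y) b = r x b + r y b)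
    (hr_add' : ∀ x b c, r x (b + c) = r x b + r x c)
    (hr_mul : ∀ x b c, r (r x b) c = r x (b * c))
    (ip : E → E → B)                                  -- the B-valued inner product
    (h_pos : ∀ x, 0 ≤ ip x x)
    (h_addr : ∀ x y z, ip x (y + z) = ip x y + ip x z)
    (h_linr : ∀ x y b, ip x (r y b) = ip x y * b)
    (h_linl : ∀ x y b, ip (r x b) y = star b * ip x y)
    (h_sym : ∀ x y, star (ip x y) = ip y x)
    (h_defin : ∀ x, ip x x = 0 → x = 0)
    (h_norm : ∀ x, ‖x‖ = Real.sqrt ‖ip x x‖)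
    (h_full : Dense (↑(Submodule.span ℂ {b : B | ∃ x y : E, ip x y = b}) : Set B))
    (X Y : E) (h_inv : IsUnit (ip X Y)) :
    IsUnit (ip X X) ∧
      ∀ c : B, 0 ≤ c → c * c = Ring.inverse (ip X X) → ip (r X c) (r X c) = 1 := by
  letI : CStarAlgebra B := ⟨⟩
  -- basic additivity consequences
  have hip0r : ∀ x : E, ip x 0 = 0 := by
    intro x
    have h := h_addr x 0 0
    rw [add_zero] at h
    exact (left_eq_add.mp h)
  have hipnegr : ∀ x y : E, ip x (-y) = -ip x y := by
    intro x y
    have h := h_addr x y (-y)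
    rw [add_neg_cancel, hip0r] at h
    exact (neg_eq_of_add_eq_zero_right h.symm).symm
  have hsubr : ∀ x u v : E, ip x (u - v) = ip x u - ip x v := by
    intro x u v
    rw [sub_eq_add_neg, h_addr, hipnegr, sub_eq_add_neg]
  have hsubl : ∀ u v x : E, ip (u - v) x = ip u x - ip v x := by
    intro u v x
    rw [← h_sym, hsubr, star_sub, h_sym, h_sym]
  -- Cauchy–Schwarz
  have CS : ∀ x y : E, star (ip x y) * ip x y ≤ ‖ip x x‖ • ip y y := by
    intro x y
    rcases eq_or_lt_of_le (norm_nonneg (ip x x)) with h0 | hKpos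
    · have hx : x = 0 := h_defin x (norm_eq_zero.mp h0.symm)
      have ha0 : ip x y = 0 := by
        rw [← h_sym, hx, ← sub_zero (0 : E), hsubr, sub_self, star_zero]
      rw [ha0, star_zero, zero_mul, ← h0, zero_smul]
    · set K := ‖ip x x‖ with hK
      have hzz : ip (r x (ip x y) - r y (K • (1 : B))) (r x (ip x y) - r y (K • (1 : B)))
          = star (ip x y) * (ip x x * ip x y)
            - (K • (star (ip x y) * ip x y) + K • (star (ip x y) * ip x y))
            + (K * K) • ip y y := by
        rw [hsubl, hsubr, hsubr]
        simp only [h_linl, h_linr, ← h_sym x y, star_smul, star_one, star_trivial,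
          mul_smul_comm, smul_mul_assoc, mul_one, one_mul, smul_smul]
        abel
      have hpos := h_pos (r x (ip x y) - r y (K • (1 : B)))
      rw [hzz] at hpos
      have h1 : K • (star (ip x y) * ip x y) + K • (star (ip x y) * ip x y)
          ≤ star (ip x y) * (ip x x * ip x y) + (K * K) • ip y y := by
        rwa [sub_add_eq_add_sub, sub_nonneg] at hpos
      have h2 : star (ip x y) * (ip x x * ip x y) ≤ K • (star (ip x y) * ip x y) := by
        have hsel : ip x x ≤ algebraMap ℝ B K :=
          IsSelfAdjoint.le_algebraMap_norm_self (IsSelfAdjoint.of_nonneg (h_pos x))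
        have hc := star_left_conjugate_le_conjugate hsel (ip x y)
        rw [Algebra.algebraMap_eq_smul_one] at hc
        calc star (ip x y) * (ip x x * ip x y) = star (ip x y) * ip x x * ip x y := by
              rw [mul_assoc]
          _ ≤ star (ip x y) * (K • (1 : B)) * ip x y := hc
          _ = K • (star (ip x y) * ip x y) := by
              rw [mul_smul_comm, mul_one, smul_mul_assoc]
      have h3 : K • (star (ip x y) * ip x y) ≤ (K * K) • ip y y := by
        have := h1.trans (add_le_add_left h2 _)
        exact le_of_add_le_add_left this
      have h4 := smul_le_smul_of_nonneg_left h3 (inv_nonneg.mpr hKpos.le)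
      rwa [smul_smul, smul_smul, inv_mul_cancel₀ hKpos.ne', one_smul, ← mul_assoc,
        inv_mul_cancel₀ hKpos.ne', one_mul] at h4
  -- the element Z with ⟨X, Z⟩ = 1
  set Z := r Y (Ring.inverse (ip X Y)) with hZ
  have hXZ : ip X Z = 1 := by
    rw [hZ, h_linr, Ring.mul_inverse_cancel _ h_inv]
  have hZX : ip Z X = 1 := by rw [← h_sym, hXZ, star_one]
  have hCS := CS Z X
  rw [hZX, star_one, one_mul] at hCS
  rcases eq_or_lt_of_le (norm_nonneg (ip Z Z)) with h0 | hK'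
  · -- degenerate case: B is trivial
    rw [← h0, zero_smul] at hCS
    have h01 : (0 : B) ≤ 1 := by simpa using star_mul_self_nonneg (1 : B)
    have : (0 : B) = 1 := le_antisymm h01 hCS
    haveI := subsingleton_of_zero_eq_one this
    exact ⟨isUnit_of_subsingleton _, fun c _ _ => Subsingleton.elim _ _⟩
  · have h1le : ‖ip Z Z‖⁻¹ • (1 : B) ≤ ip X X := by
      have h4 := smul_le_smul_of_nonneg_left hCS (inv_nonneg.mpr hK'.le)
      rwa [smul_smul, inv_mul_cancel₀ hK'.ne', one_smul] at h4
    have hUnit : IsUnit (ip X X) := by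
      refine CStarAlgebra.isUnit_of_le _ h1le (And.symm ⟨?_, ?_⟩)
      · refine ⟨⟨‖ip Z Z‖⁻¹ • (1 : B), ‖ip Z Z‖ • (1 : B), ?_, ?_⟩, rfl⟩
        · rw [smul_mul_smul_comm, inv_mul_cancel₀ hK'.ne', mul_one, one_smul]
        · rw [smul_mul_smul_comm, mul_inv_cancel₀ hK'.ne', mul_one, one_smul]
      · exact smul_nonneg (inv_nonneg.mpr hK'.le)
          (by simpa using star_mul_self_nonneg (1 : B))
    refine ⟨hUnit, fun c hc hc2 => ?_⟩
    have hcsa : star c = c := IsSelfAdjoint.of_nonneg hc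
    have hcomm : Commute c (ip X X) := by
      obtain ⟨u, hu⟩ := hUnit
      have h1 : Commute c (Ring.inverse (ip X X)) := by
        rw [← hc2]; exact (Commute.refl c).mul_right (Commute.refl c)
      rw [← hu, Ring.inverse_unit] at h1
      have h2 := h1.units_inv_right
      rw [inv_inv] at h2
      rw [← hu]
      exact h2
    rw [h_linl, h_linr, hcsa, ← mul_assoc, hcomm.eq, mul_assoc, hc2,
      Ring.mul_inverse_cancel _ hUnit]
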